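/- A bounded configuration ξ ∈ Ω_A^τ is uniquely determined by the pair (κ(ξ), R_ξ(κ(ξ))) consisting of its (finite) stem and the root of its stem. Conversely, every pair (κ, R) with κ a finite positive admissible word and R ⊆ ℕ a set containing the last letter of κ (when κ ≠ e) arises as such a pair for exactly one configuration in Ω_A^τ. -/

import Mathlib

/-- The positive element of the free group `𝔽 = F(ℕ)` associated to a finite word. -/
def listToF (l : List ℕ) : FreeGroup ℕ := (l.map FreeGroup.of).prod

/-- The word-metric distance in the Cayley tree of the free group. -/
def fgDist (a b : FreeGroup ℕ) : ℕ := (FreeGroup.toWord (a⁻¹ * b)).length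

/-- The rules (R1)-(R4) defining `Ω_A^τ`. -/
def OmegaTau (A : ℕ → ℕ → Bool) (ξ : FreeGroup ℕ → Bool) : Prop :=
  ξ 1 = true ∧
  (∀ a b c : FreeGroup ℕ, ξ a = true → ξ b = true →
    fgDist a c + fgDist c b = fgDist a b → ξ c = true) ∧
  (∀ g : FreeGroup ℕ, ξ g = true → ∀ y z : ℕ,
    ξ (g * FreeGroup.of y) = true → ξ (g * FreeGroup.of z) = true → y = z) ∧
  (∀ (g : FreeGroup ℕ) (y : ℕ), ξ g = true → ξ (g * FreeGroup.of y) = true →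
    ∀ x : ℕ, (ξ (g * (FreeGroup.of x)⁻¹) = true ↔ A x y = true))

/-- `ξ` has the finite word `κ` as its stem: the filled positive elements of `ξ` are
exactly the prefixes of `κ`. -/
def HasStem (ξ : FreeGroup ℕ → Bool) (κ : List ℕ) : Prop :=
  ∀ l : List ℕ, (ξ (listToF l) = true ↔ l <+: κ)

namespace StemProof
open FreeGroup List

abbrev W := List (ℕ × Bool)

def NR (p q : ℕ × Bool) : Prop := p.1 = q.1 → p.2 = q.2

def Reduced (w : W) : Prop := w.Chain' NR

lemma not_nr_iff (p q : ℕ × Bool) : ¬ NR p q ↔ (p.1 = q.1 ∧ p.2 = !q.2) := by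
  unfold NR
  by_cases h1 : p.1 = q.1 <;> cases hp : p.2 <;> cases hq : q.2 <;> simp_all

lemma reduce_eq_self_of_reduced : ∀ {w : W}, Reduced w → FreeGroup.reduce w = w := by
  intro w
  induction w with
  | nil => intro _; rfl
  | cons x t ih =>
    intro h
    have ht : Reduced t := h.tail
    rw [FreeGroup.reduce.cons, ih ht]
    cases t with
    | nil => rfl
    | cons y s =>
      have hxy : NR x y := List.isChain_cons_cons.mp h |>.1
      have : ¬ (x.1 = y.1 ∧ x.2 = !y.2) := fun hc => ((not_nr_iff x y).mpr hc) hxy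
      simp [this]

lemma reduced_of_reduce_eq_self : ∀ {w : W}, FreeGroup.reduce w = w → Reduced w := by
  intro w
  induction w with
  | nil => intro _; exact List.isChain_nil
  | cons x t ih =>
    intro h
    rw [FreeGroup.reduce.cons] at h
    rcases hrt : FreeGroup.reduce t with _ | ⟨y, s⟩
    · rw [hrt] at h
      simp only at h
      have : t = [] := by
        have := congrArg List.tail h
        simpa using this.symm
      subst this
      exact List.isChain_singleton x
    · rw [hrt] at h
      simp only at h
      by_cases hc : x.1 = y.1 ∧ x.2 = !y.2
      · rw [if_pos hc] at h
        -- h : s = x :: t, but length s ≤ length t - 1, contradiction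
        have hlen : (FreeGroup.reduce t).length ≤ t.length :=
          FreeGroup.Red.length_le (FreeGroup.reduce.red)
        rw [hrt] at hlen
        have : (x :: t).length ≤ s.length := le_of_eq (congrArg List.length h.symm)
        simp at hlen this
        omega
      · rw [if_neg hc] at h
        have hxt : t = y :: s := by
          have := congrArg List.tail h
          simpa using this.symm
        have : Reduced t := ih (by rw [hxt] at hrt ⊢; exact hrt)
        rw [hxt] at this ⊢
        refine List.isChain_cons_cons.mpr ⟨?_, this⟩
        by_contra hnr
        exact hc ((not_nr_iff x y).mp hnr)

lemma reduced_iff (w : W) : Reduced w ↔ FreeGroup.reduce w = w :=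
  ⟨reduce_eq_self_of_reduced, reduced_of_reduce_eq_self⟩

lemma toWord_mk_reduced {w : W} (h : Reduced w) : (FreeGroup.mk w).toWord = w := by
  rw [FreeGroup.toWord_mk, reduce_eq_self_of_reduced h]

lemma reduced_toWord (g : FreeGroup ℕ) : Reduced g.toWord :=
  reduced_of_reduce_eq_self (FreeGroup.reduce_toWord g)

lemma eq_of_red_of_length {L M : W} (h : FreeGroup.Red L M) (hl : L.length = M.length) : L = M := by
  rcases Relation.ReflTransGen.cases_head h with rfl | ⟨c, hstep, hred⟩
  · rfl
  · have h1 := FreeGroup.Red.Step.length hstep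
    have h2 := FreeGroup.Red.length_le hred
    omega

lemma toWord_mul_split {x y : FreeGroup ℕ}
    (h : (x * y).toWord.length = x.toWord.length + y.toWord.length) :
    (x * y).toWord = x.toWord ++ y.toWord := by
  have hmk : x * y = FreeGroup.mk (x.toWord ++ y.toWord) := by
    rw [← FreeGroup.mul_mk, FreeGroup.mk_toWord, FreeGroup.mk_toWord]
  have hred : FreeGroup.Red (x.toWord ++ y.toWord) ((x*y).toWord) := by
    rw [hmk, FreeGroup.toWord_mk]
    exact FreeGroup.reduce.red
  have := eq_of_red_of_length hred (by simp [h])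
  exact this.symm


/-! ### Words of the canonical configuration -/

def T (l : List ℕ) : W := l.map (fun a => (a, true))
def Fw (l : List ℕ) : W := l.map (fun a => (a, false))

variable (A : ℕ → ℕ → Bool) (κ : List ℕ) (R : Set ℕ)

def wordOf (k : ℕ) (N : List ℕ) : W := T (κ.take k) ++ Fw N

/-- The admissibility condition on the pair `(k, N)`. -/
def SW (k : ℕ) (N : List ℕ) : Prop :=
  k ≤ κ.length ∧ N.Chain' (fun a b => A b a = true) ∧
  ∀ x ∈ N.head?, (∀ h : k < κ.length, A x (κ.get ⟨k, h⟩) = true) ∧ (k = κ.length → x ∈ R)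

def memS (g : FreeGroup ℕ) : Prop := ∃ k N, SW A κ R k N ∧ g.toWord = wordOf κ k N

lemma mk_T_singleton (x : ℕ) : FreeGroup.mk [(x, true)] = FreeGroup.of x := rfl

lemma mk_F_singleton (x : ℕ) : FreeGroup.mk [(x, false)] = (FreeGroup.of x)⁻¹ := by
  rw [← mk_T_singleton, FreeGroup.inv_mk]
  simp [FreeGroup.invRev]

lemma listToF_eq (l : List ℕ) : listToF l = FreeGroup.mk (T l) := by
  induction l with
  | nil => simp [listToF, T]; rfl
  | cons a t ih =>
    have : listToF (a :: t) = FreeGroup.of a * listToF t := by simp [listToF]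
    rw [this, ih, ← mk_T_singleton, FreeGroup.mul_mk]
    rfl

lemma chain'_trivial {α : Type*} (l : List α) : l.Chain' (fun _ _ => True) := by
  induction l with
  | nil => exact List.isChain_nil
  | cons a t ih => cases t with
    | nil => exact List.isChain_singleton a
    | cons b s => exact List.isChain_cons_cons.mpr ⟨trivial, ih⟩

lemma reduced_T (l : List ℕ) : Reduced (T l) := by
  unfold Reduced T
  rw [List.Chain', List.isChain_map]
  exact (chain'_trivial l).imp (fun _ _ _ => by intro; rfl)

lemma reduced_Fw (l : List ℕ) : Reduced (Fw l) := by
  unfold Reduced Fw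
  rw [List.Chain', List.isChain_map]
  exact (chain'_trivial l).imp (fun _ _ _ => by intro; rfl)

lemma getLast?_T (l : List ℕ) : (T l).getLast? = l.getLast?.map (fun a => (a, true)) :=
  List.getLast?_map

lemma head?_Fw (l : List ℕ) : (Fw l).head? = l.head?.map (fun a => (a, false)) :=
  List.head?_map

lemma reduced_wordOf {k : ℕ} {N : List ℕ}
    (h : ∀ c ∈ (κ.take k).getLast?, ∀ x ∈ N.head?, c ≠ x) :
    Reduced (wordOf κ k N) := by
  unfold Reduced wordOf
  rw [List.Chain', List.isChain_append]
  refine ⟨reduced_T _, reduced_Fw _, ?_⟩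
  intro p hp q hq
  rw [getLast?_T] at hp
  rw [head?_Fw] at hq
  rcases Option.map_eq_some_iff.mp hp with ⟨c, hc, rfl⟩
  rcases Option.map_eq_some_iff.mp hq with ⟨x, hx, rfl⟩
  intro hcx
  exact absurd hcx (h c hc x hx)

lemma take_succ_get {k : ℕ} (hk : k < κ.length) :
    κ.take (k + 1) = κ.take k ++ [κ.get ⟨k, hk⟩] := by
  rw [List.take_succ]
  simp [List.getElem?_eq_getElem hk]

lemma mk_wordOf_cancel {k : ℕ} (hk : k < κ.length) (N : List ℕ) :
    FreeGroup.mk (wordOf κ (k + 1) (κ.get ⟨k, hk⟩ :: N)) = FreeGroup.mk (wordOf κ k N) := by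
  unfold wordOf
  rw [take_succ_get κ hk]
  set c := κ.get ⟨k, hk⟩
  have hT : T (κ.take k ++ [c]) = T (κ.take k) ++ [(c, true)] := by simp [T]
  have hF : Fw (c :: N) = [(c, false)] ++ Fw N := by simp [Fw]
  rw [hT, hF, ← FreeGroup.mul_mk, ← FreeGroup.mul_mk, ← FreeGroup.mul_mk, ← FreeGroup.mul_mk]
  rw [mk_T_singleton, mk_F_singleton]
  group

lemma SW_step {k : ℕ} {N : List ℕ} (hk : k < κ.length)
    (h : SW A κ R (k + 1) (κ.get ⟨k, hk⟩ :: N)) : SW A κ R k N := by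
  obtain ⟨hlen, hchain, hhead⟩ := h
  refine ⟨le_of_lt hk, hchain.tail, ?_⟩
  intro x hx
  refine ⟨fun h' => ?_, fun h' => absurd h' (Nat.ne_of_lt hk)⟩
  -- chain gives A x (κ.get k)
  cases N with
  | nil => simp at hx
  | cons y N' =>
    simp at hx
    subst hx
    exact List.isChain_cons_cons.mp hchain |>.1

lemma memS_mk : ∀ (k : ℕ) (N : List ℕ), SW A κ R k N → memS A κ R (FreeGroup.mk (wordOf κ k N)) := by
  intro k
  induction k with
  | zero =>
    intro N hSW
    refine ⟨0, N, hSW, ?_⟩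
    apply toWord_mk_reduced
    apply reduced_wordOf
    simp
  | succ k ih =>
    intro N hSW
    have hk : k < κ.length := hSW.1
    by_cases hcase : ∃ N', N = κ.get ⟨k, hk⟩ :: N'
    · obtain ⟨N', rfl⟩ := hcase
      rw [mk_wordOf_cancel κ hk]
      exact ih N' (SW_step A κ R hk hSW)
    · refine ⟨k + 1, N, hSW, ?_⟩
      apply toWord_mk_reduced
      apply reduced_wordOf
      intro c hc x hx
      have hc' : c = κ.get ⟨k, hk⟩ := by
        rw [take_succ_get κ hk, List.getLast?_concat] at hc
        simpa using hc.symm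
      subst hc'
      intro hcx
      subst hcx
      cases N with
      | nil => simp at hx
      | cons y N' =>
        simp at hx
        exact hcase ⟨N', by simp [hx, List.get_eq_getElem]⟩

lemma Fw_inj {N N' : List ℕ} (h : Fw N = Fw N') : N = N' := by
  have : Function.Injective (fun a : ℕ => (a, false)) := fun a b hab => congrArg Prod.fst hab
  exact List.map_injective_iff.mpr this h

lemma wordOf_inj {k k' : ℕ} {N N' : List ℕ} (hk : k ≤ κ.length) (hk' : k' ≤ κ.length)
    (h : wordOf κ k N = wordOf κ k' N') : k = k' ∧ N = N' := by
  have hcount : ∀ (m : ℕ) (M : List ℕ), m ≤ κ.length →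
      ((wordOf κ m M).map Prod.snd).count true = m := by
    intro m M hm
    unfold wordOf T Fw
    simp [List.map_map, Function.comp_def, List.count_append, List.count_replicate,
      List.map_const', min_eq_left hm]
  have hkk' : k = k' := by
    have := congrArg (fun w => (w.map Prod.snd).count true) h
    simpa [hcount k N hk, hcount k' N' hk'] using this
  subst hkk'
  refine ⟨rfl, ?_⟩
  unfold wordOf at h
  have := (List.append_inj h rfl).2
  exact Fw_inj this


/-! ### Geodesics -/

lemma invRev_append' (u w : W) : FreeGroup.invRev (u ++ w) = FreeGroup.invRev w ++ FreeGroup.invRev u := by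
  simp [FreeGroup.invRev]

lemma invRev_reduced {w : W} (h : Reduced w) : Reduced (FreeGroup.invRev w) := by
  unfold Reduced FreeGroup.invRev
  rw [List.Chain', List.isChain_reverse, List.isChain_map]
  refine h.imp ?_
  intro p q hpq
  intro h1
  have := hpq h1.symm
  simp [this]

lemma mk_invRev_mul (u : W) : FreeGroup.mk (FreeGroup.invRev u) * FreeGroup.mk u = 1 := by
  rw [← FreeGroup.inv_mk]
  group

lemma mk_mul_invRev (u : W) : FreeGroup.mk u * FreeGroup.mk (FreeGroup.invRev u) = 1 := by
  rw [← FreeGroup.inv_mk]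
  group

lemma common_prefix : ∀ (wa wb : W), Reduced wa → Reduced wb →
    ∃ p sa sb, wa = p ++ sa ∧ wb = p ++ sb ∧ Reduced (FreeGroup.invRev sa ++ sb) := by
  intro wa
  induction wa with
  | nil =>
    intro wb _ hb
    exact ⟨[], [], wb, rfl, rfl, by simpa [FreeGroup.invRev] using hb⟩
  | cons x wa' ih =>
    intro wb ha hb
    cases wb with
    | nil =>
      refine ⟨[], x :: wa', [], rfl, rfl, ?_⟩
      simpa using invRev_reduced ha
    | cons y wb' =>
      by_cases hxy : x = y
      · subst hxy
        obtain ⟨p, sa, sb, h1, h2, h3⟩ := ih wb' ha.tail hb.tail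
        exact ⟨x :: p, sa, sb, by rw [List.cons_append, ← h1], by rw [List.cons_append, ← h2], h3⟩
      · refine ⟨[], x :: wa', y :: wb', rfl, rfl, ?_⟩
        unfold Reduced
        rw [List.Chain', List.isChain_append]
        refine ⟨invRev_reduced ha, hb, ?_⟩
        intro p hp q hq
        unfold FreeGroup.invRev at hp
        rw [List.getLast?_reverse] at hp
        simp only [List.head?_cons, Option.mem_some_iff] at hq
        have hp' : p = (x.1, !x.2) := by
          rw [List.map_cons, List.head?_cons] at hp
          simpa using hp.symm
        subst hp'
        subst hq
        intro h1
        have hne : x.2 ≠ y.2 := fun h2 => hxy (Prod.ext h1 h2)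
        cases hx2 : x.2 <;> cases hy2 : y.2 <;> simp_all

lemma dist_split {a b c : FreeGroup ℕ} (h : fgDist a c + fgDist c b = fgDist a b) :
    (a⁻¹ * b).toWord = (a⁻¹ * c).toWord ++ (c⁻¹ * b).toWord := by
  have habc : (a⁻¹ * c) * (c⁻¹ * b) = a⁻¹ * b := by group
  have := toWord_mul_split (x := a⁻¹ * c) (y := c⁻¹ * b) (by rw [habc]; exact h.symm)
  rw [habc] at this
  exact this

lemma geodesic_prefix {a b c : FreeGroup ℕ} (h : fgDist a c + fgDist c b = fgDist a b) :
    c.toWord <+: a.toWord ∨ c.toWord <+: b.toWord := by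
  obtain ⟨p, sa, sb, hwa, hwb, hred⟩ :=
    common_prefix a.toWord b.toWord (reduced_toWord a) (reduced_toWord b)
  have hab : (a⁻¹ * b).toWord = FreeGroup.invRev sa ++ sb := by
    have heq : a⁻¹ * b = FreeGroup.mk (FreeGroup.invRev sa ++ sb) := by
      calc a⁻¹ * b = (FreeGroup.mk (p ++ sa))⁻¹ * FreeGroup.mk (p ++ sb) := by
            rw [← hwa, ← hwb, FreeGroup.mk_toWord, FreeGroup.mk_toWord]
        _ = (FreeGroup.mk p * FreeGroup.mk sa)⁻¹ * (FreeGroup.mk p * FreeGroup.mk sb) := by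
            rw [FreeGroup.mul_mk, FreeGroup.mul_mk]
        _ = (FreeGroup.mk sa)⁻¹ * FreeGroup.mk sb := by group
        _ = FreeGroup.mk (FreeGroup.invRev sa ++ sb) := by rw [FreeGroup.inv_mk, FreeGroup.mul_mk]
    rw [heq, FreeGroup.toWord_mk, reduce_eq_self_of_reduced hred]
  have hsplit := dist_split h
  set u := (a⁻¹ * c).toWord with hu
  have hc : c = a * FreeGroup.mk u := by rw [hu, FreeGroup.mk_toWord]; group
  rw [hab] at hsplit
  have h1 : List.take u.length (FreeGroup.invRev sa ++ sb) = u := by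
    rw [hsplit]; exact List.take_left
  rcases le_or_gt u.length sa.length with hle | hlt
  · -- u is a prefix of invRev sa
    left
    have hupre : u <+: FreeGroup.invRev sa := by
      rw [← h1, List.take_append_of_le_length (by rwa [FreeGroup.invRev_length])]
      exact List.take_prefix _ _
    obtain ⟨w, hw⟩ := hupre
    have hsa : sa = FreeGroup.invRev w ++ FreeGroup.invRev u := by
      rw [← invRev_append', hw, FreeGroup.invRev_invRev]
    have hceq : c = FreeGroup.mk (p ++ FreeGroup.invRev w) := by
      have h2 : c = FreeGroup.mk p * (FreeGroup.mk (FreeGroup.invRev w) *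
          (FreeGroup.mk (FreeGroup.invRev u) * FreeGroup.mk u)) := by
        rw [hc, ← FreeGroup.mk_toWord (x := a), hwa, hsa, ← FreeGroup.mul_mk, ← FreeGroup.mul_mk]
        group
      rw [h2, mk_invRev_mul, mul_one, FreeGroup.mul_mk]
    have hpre : (p ++ FreeGroup.invRev w) <+: a.toWord := by
      rw [hwa, hsa]
      exact ⟨FreeGroup.invRev u, by simp⟩
    have hredc : Reduced (p ++ FreeGroup.invRev w) := (reduced_toWord a).prefix hpre
    rw [hceq, toWord_mk_reduced hredc]
    exact hpre
  · -- u = invRev sa ++ (a prefix of sb)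
    right
    have hu2 : u = FreeGroup.invRev sa ++ List.take (u.length - sa.length) sb := by
      conv_lhs => rw [← h1]
      rw [List.take_append, FreeGroup.invRev_length,
        List.take_of_length_le (by rw [FreeGroup.invRev_length]; omega)]
    set m := u.length - sa.length
    have hceq : c = FreeGroup.mk (p ++ List.take m sb) := by
      have h2 : c = FreeGroup.mk p * ((FreeGroup.mk sa * FreeGroup.mk (FreeGroup.invRev sa)) *
          FreeGroup.mk (List.take m sb)) := by
        rw [hc, ← FreeGroup.mk_toWord (x := a), hwa, hu2, ← FreeGroup.mul_mk, ← FreeGroup.mul_mk]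
        simp [mul_assoc]
      rw [h2, mk_mul_invRev, one_mul, FreeGroup.mul_mk]
    have hpre : (p ++ List.take m sb) <+: b.toWord := by
      rw [hwb]
      exact ⟨sb.drop m, by simp⟩
    have hredc : Reduced (p ++ List.take m sb) := (reduced_toWord b).prefix hpre
    rw [hceq, toWord_mk_reduced hredc]
    exact hpre


/-! ### Prefix closure of memS -/

lemma memS_prefix {g : FreeGroup ℕ} (h : memS A κ R g) {u : W} (hu : u <+: g.toWord) :
    memS A κ R (FreeGroup.mk u) := by
  obtain ⟨k, N, ⟨hk, hchain, hhead⟩, hw⟩ := h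
  have hredu : Reduced u := (reduced_toWord g).prefix hu
  set i := u.length with hi
  have hTlen : (T (κ.take k)).length = k := by
    simp [T, min_eq_left hk]
  have hueq : u = wordOf κ (min i k) (N.take (i - k)) := by
    have h0 := List.prefix_iff_eq_take.mp hu
    rw [hw] at h0
    unfold wordOf at h0 ⊢
    rw [List.take_append, hTlen] at h0
    rw [h0]
    congr 1
    · unfold T
      rw [← List.map_take, List.take_take]
    · unfold Fw
      rw [← List.map_take]
  refine ⟨min i k, N.take (i - k),
    ⟨le_trans (min_le_right _ _) hk, hchain.prefix (List.take_prefix _ _), ?_⟩,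
    by rw [← hueq]; exact toWord_mk_reduced hredu⟩
  intro x hx
  have hik : k < i := by
    by_contra hik
    push_neg at hik
    have h2 : i - k = 0 := by omega
    rw [h2] at hx
    simp at hx
  have hmin : min i k = k := by omega
  have hx' : x ∈ N.head? := by
    cases N with
    | nil => simp at hx
    | cons n N' =>
      obtain ⟨j, hj⟩ : ∃ j, i - k = j + 1 := ⟨i - k - 1, by omega⟩
      rw [hj] at hx
      simp only [List.take_succ_cons, List.head?_cons, Option.mem_some_iff] at hx
      simp [hx]
  simp only [hmin]
  exact hhead x hx'

/-! ### The canonical configuration -/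

noncomputable def xi (g : FreeGroup ℕ) : Bool :=
  @decide (memS A κ R g) (Classical.propDecidable _)

lemma xi_iff (g : FreeGroup ℕ) : xi A κ R g = true ↔ memS A κ R g := by
  unfold xi
  letI := Classical.propDecidable (memS A κ R g)
  exact decide_eq_true_iff

lemma mul_of_eq (g : FreeGroup ℕ) (y : ℕ) :
    g * FreeGroup.of y = FreeGroup.mk (g.toWord ++ [(y, true)]) := by
  rw [← FreeGroup.mul_mk, FreeGroup.mk_toWord, mk_T_singleton]

lemma mul_inv_of_eq (g : FreeGroup ℕ) (x : ℕ) :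
    g * (FreeGroup.of x)⁻¹ = FreeGroup.mk (g.toWord ++ [(x, false)]) := by
  rw [← FreeGroup.mul_mk, FreeGroup.mk_toWord, mk_F_singleton]

lemma mem_T_snd {l : List ℕ} {p : ℕ × Bool} (hp : p ∈ T l) : p.2 = true := by
  unfold T at hp
  rcases List.mem_map.mp hp with ⟨a, _, rfl⟩
  rfl

lemma wordOf_getLast_concat {k : ℕ} (N' : List ℕ) (n : ℕ) :
    (wordOf κ k (N' ++ [n])).getLast? = some (n, false) := by
  unfold wordOf Fw
  rw [List.getLast?_append_of_ne_nil _ (by simp), List.map_append]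
  simp

lemma T_inj {l l' : List ℕ} (h : T l = T l') : l = l' := by
  have : Function.Injective (fun a : ℕ => (a, true)) := fun a b hab => congrArg Prod.fst hab
  exact List.map_injective_iff.mpr this h

lemma wordOf_nil_concat {k : ℕ} (y : ℕ) :
    wordOf κ k [] ++ [(y, true)] = T (κ.take k ++ [y]) := by
  simp [wordOf, T, Fw]

/-- Structure of filled positive successors. -/
lemma succ_struct {g : FreeGroup ℕ} {k : ℕ} {N : List ℕ} (hk : k ≤ κ.length)
    (hw : g.toWord = wordOf κ k N) {y : ℕ} (hy : memS A κ R (g * FreeGroup.of y)) :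
    (∃ N', N = N' ++ [y]) ∨ (N = [] ∧ ∃ hk' : k < κ.length, y = κ.get ⟨k, hk'⟩) := by
  obtain ⟨k₂, N₂, ⟨hk₂, _, _⟩, hw₂⟩ := hy
  rw [mul_of_eq, hw] at hw₂
  rcases List.eq_nil_or_concat N with rfl | ⟨N', n, rfl⟩
  · -- N = []
    right
    refine ⟨rfl, ?_⟩
    have hred : Reduced (wordOf κ k [] ++ [(y, true)]) := by
      rw [wordOf_nil_concat]
      exact reduced_T _
    rw [toWord_mk_reduced hred] at hw₂
    have hN₂ : N₂ = [] := by
      rcases List.eq_nil_or_concat N₂ with rfl | ⟨L, b, rfl⟩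
      · rfl
      · exfalso
        simp only [List.concat_eq_append] at hw₂
        have h1 := wordOf_getLast_concat κ (k := k₂) L b
        rw [← hw₂, wordOf_nil_concat] at h1
        have h2 : (T (κ.take k ++ [y])).getLast? = some (y, true) := by
          unfold T
          rw [List.map_append]
          simp
        rw [h2] at h1
        simp at h1
    subst hN₂
    have hTeq : T (κ.take k ++ [y]) = T (κ.take k₂) := by
      rw [← wordOf_nil_concat, hw₂]
      simp [wordOf, Fw]
    have heq : κ.take k ++ [y] = κ.take k₂ := T_inj hTeq
    have hlen : k + 1 = k₂ := by
      have := congrArg List.length heq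
      simp [min_eq_left hk, min_eq_left hk₂] at this
      omega
    have hk' : k < κ.length := by omega
    refine ⟨hk', ?_⟩
    rw [← hlen, take_succ_get κ hk'] at heq
    have := (List.append_inj heq rfl).2
    simpa using this
  · -- N = N' ++ [n]
    simp only [List.concat_eq_append] at hw hw₂ ⊢
    by_cases hyn : y = n
    · exact Or.inl ⟨N', by rw [hyn]⟩
    · exfalso
      have hgred : Reduced (wordOf κ k (N' ++ [n])) := by
        rw [← hw]; exact reduced_toWord g
      have hred : Reduced (wordOf κ k (N' ++ [n]) ++ [(y, true)]) := by
        unfold Reduced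
        rw [List.Chain', List.isChain_append]
        refine ⟨hgred, List.isChain_singleton _, ?_⟩
        intro p hp q hq
        rw [wordOf_getLast_concat κ N' n] at hp
        simp only [Option.mem_some_iff] at hp
        simp only [List.head?_cons, Option.mem_some_iff] at hq
        subst hp
        subst hq
        intro h2
        exact absurd h2.symm hyn
      rw [toWord_mk_reduced hred] at hw₂
      have hN₂ : N₂ = [] := by
        rcases List.eq_nil_or_concat N₂ with rfl | ⟨L, b, rfl⟩
        · rfl
        · exfalso
          simp only [List.concat_eq_append] at hw₂
          have h1 := wordOf_getLast_concat κ (k := k₂) L b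
          rw [← hw₂, List.getLast?_concat] at h1
          simp at h1
      subst hN₂
      have hmem : ((n : ℕ), false) ∈ wordOf κ k (N' ++ [n]) ++ [(y, true)] := by
        apply List.mem_append_left
        apply List.mem_append_right
        simp [Fw]
      rw [hw₂] at hmem
      have : ((n : ℕ), false).2 = true := by
        apply mem_T_snd (l := κ.take k₂)
        simpa [wordOf, Fw] using hmem
      simp at this

lemma wordOf_append_neg (k : ℕ) (N : List ℕ) (x : ℕ) :
    wordOf κ k (N ++ [x]) = wordOf κ k N ++ [(x, false)] := by
  simp [wordOf, Fw]

lemma SW_nil {k : ℕ} (hk : k ≤ κ.length) : SW A κ R k [] :=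
  ⟨hk, List.isChain_nil, by simp⟩

lemma xi_R1 : xi A κ R 1 = true := by
  rw [xi_iff]
  exact ⟨0, [], SW_nil A κ R (Nat.zero_le _), by simp [FreeGroup.toWord_one, wordOf, T, Fw]⟩

lemma xi_R2 (a b c : FreeGroup ℕ) (ha : xi A κ R a = true) (hb : xi A κ R b = true)
    (h : fgDist a c + fgDist c b = fgDist a b) : xi A κ R c = true := by
  rw [xi_iff] at ha hb ⊢
  rcases geodesic_prefix h with hpre | hpre
  · have := memS_prefix A κ R ha hpre
    rwa [FreeGroup.mk_toWord] at this
  · have := memS_prefix A κ R hb hpre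
    rwa [FreeGroup.mk_toWord] at this

lemma xi_R3 (g : FreeGroup ℕ) (hg : xi A κ R g = true) (y z : ℕ)
    (hy : xi A κ R (g * FreeGroup.of y) = true) (hz : xi A κ R (g * FreeGroup.of z) = true) :
    y = z := by
  rw [xi_iff] at hg hy hz
  obtain ⟨k, N, ⟨hk, hch, hhd⟩, hw⟩ := hg
  rcases succ_struct A κ R hk hw hy with ⟨N', hN⟩ | ⟨hN, hk', hy'⟩ <;>
    rcases succ_struct A κ R hk hw hz with ⟨N'', hN2⟩ | ⟨hN2, hk'', hz'⟩
  · have h1 : N.getLast? = some y := by rw [hN, List.getLast?_concat]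
    have h2 : N.getLast? = some z := by rw [hN2, List.getLast?_concat]
    rw [h1] at h2
    exact (Option.some_inj.mp h2)
  · subst hN2; simp at hN
  · subst hN; simp at hN2
  · rw [hy', hz']

lemma xi_R4 (hκ : κ.Chain' (fun a b => A a b = true)) (g : FreeGroup ℕ) (y : ℕ) (hg : xi A κ R g = true)
    (hy : xi A κ R (g * FreeGroup.of y) = true) (x : ℕ) :
    xi A κ R (g * (FreeGroup.of x)⁻¹) = true ↔ A x y = true := by
  rw [xi_iff] at hg hy
  rw [xi_iff]
  obtain ⟨k, N, ⟨hk, hch, hhd⟩, hw⟩ := hg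
  rcases succ_struct A κ R hk hw hy with ⟨N', rfl⟩ | ⟨rfl, hk', rfl⟩
  · -- N = N' ++ [y]
    have hw' : g * (FreeGroup.of x)⁻¹ = FreeGroup.mk (wordOf κ k (N' ++ [y] ++ [x])) := by
      rw [mul_inv_of_eq, hw, ← wordOf_append_neg]
    have hred : Reduced (wordOf κ k (N' ++ [y] ++ [x])) := by
      rw [wordOf_append_neg]
      unfold Reduced
      rw [List.Chain', List.isChain_append]
      refine ⟨(by rw [← hw]; exact reduced_toWord g), List.isChain_singleton _, ?_⟩
      intro p hp q hq
      rw [wordOf_getLast_concat] at hp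
      simp only [Option.mem_some_iff, List.head?_cons] at hp hq
      subst hp; subst hq
      intro _; rfl
    constructor
    · intro hmem
      obtain ⟨k₃, N₃, ⟨hk₃, hch₃, _⟩, hw₃⟩ := hmem
      rw [hw', toWord_mk_reduced hred] at hw₃
      obtain ⟨hkk, hNN⟩ := wordOf_inj κ hk hk₃ hw₃
      rw [← hNN] at hch₃
      have := (List.isChain_append.mp hch₃).2.2 y (by simp [List.getLast?_concat]) x (by simp)
      exact this
    · intro hA
      rw [hw']
      refine ⟨k, N' ++ [y] ++ [x], ⟨hk, ?_, ?_⟩, toWord_mk_reduced hred⟩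
      · rw [List.Chain', List.isChain_append]
        refine ⟨hch, List.isChain_singleton _, ?_⟩
        intro p hp q hq
        simp only [List.getLast?_concat, Option.mem_some_iff, List.head?_cons] at hp hq
        subst hp; subst hq
        exact hA
      · intro x' hx'
        rw [List.head?_append_of_ne_nil _ (by simp)] at hx'
        exact hhd x' hx'
  · -- N = [], y = κ.get ⟨k, hk'⟩
    have hwx : g * (FreeGroup.of x)⁻¹ = FreeGroup.mk (wordOf κ k [x]) := by
      rw [mul_inv_of_eq, hw]
      congr 1
      simpa using (wordOf_append_neg κ k [] x).symm
    by_cases hc : (κ.take k).getLast? = some x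
    · -- cancellation case: x is the k-th letter of the stem
      rcases k with _ | m
      · simp at hc
      · have hm : m < κ.length := lt_of_lt_of_le (Nat.lt_succ_self m) hk
        have hx : x = κ.get ⟨m, hm⟩ := by
          rw [take_succ_get κ hm, List.getLast?_concat] at hc
          simpa using hc.symm
        have hLHS : memS A κ R (g * (FreeGroup.of x)⁻¹) := by
          rw [hwx, hx, mk_wordOf_cancel κ hm]
          exact memS_mk A κ R m [] (SW_nil A κ R (le_of_lt hm))
        have hRHS : A x (κ.get ⟨m + 1, hk'⟩) = true := by
          rw [hx]
          have := List.isChain_iff_getElem.mp hκ m (by omega)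
          exact this
        exact iff_of_true hLHS hRHS
    · have hred : Reduced (wordOf κ k [x]) := by
        apply reduced_wordOf
        intro c hcc x' hx'
        simp only [List.head?_cons, Option.mem_some_iff] at hx'
        subst hx'
        intro hcx
        subst hcx
        exact hc hcc
      constructor
      · intro hmem
        obtain ⟨k₃, N₃, ⟨hk₃, hch₃, hhd₃⟩, hw₃⟩ := hmem
        rw [hwx, toWord_mk_reduced hred] at hw₃
        obtain ⟨hkk, hNN⟩ := wordOf_inj κ hk hk₃ hw₃
        subst hkk
        rw [← hNN] at hhd₃
        exact (hhd₃ x (by simp)).1 hk'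
      · intro hA
        rw [hwx]
        refine ⟨k, [x], ⟨hk, List.isChain_singleton _, ?_⟩, toWord_mk_reduced hred⟩
        intro x' hx'
        simp only [List.head?_cons, Option.mem_some_iff] at hx'
        subst hx'
        exact ⟨fun h => hA, fun h => absurd h (Nat.ne_of_lt hk')⟩


/-! ### Stem and root of the canonical configuration -/

lemma mk_wordOf_nil (k : ℕ) : FreeGroup.mk (wordOf κ k []) = listToF (κ.take k) := by
  rw [listToF_eq]
  simp [wordOf, Fw]

lemma mk_wordOf_mul_inv_of (k : ℕ) (N : List ℕ) (x : ℕ) :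
    FreeGroup.mk (wordOf κ k N) * (FreeGroup.of x)⁻¹ = FreeGroup.mk (wordOf κ k (N ++ [x])) := by
  rw [wordOf_append_neg, ← FreeGroup.mul_mk, mk_F_singleton]

lemma mk_wordOf_concat_mul_of (k : ℕ) (N : List ℕ) (n : ℕ) :
    FreeGroup.mk (wordOf κ k (N ++ [n])) * FreeGroup.of n = FreeGroup.mk (wordOf κ k N) := by
  rw [wordOf_append_neg, ← FreeGroup.mul_mk, mk_F_singleton, mul_assoc]
  group

lemma listToF_concat (l : List ℕ) (y : ℕ) :
    listToF (l ++ [y]) = listToF l * FreeGroup.of y := by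
  simp [listToF]

lemma mk_wordOf_nil_mul_of {k : ℕ} (hk : k < κ.length) :
    FreeGroup.mk (wordOf κ k []) * FreeGroup.of (κ.get ⟨k, hk⟩) =
      FreeGroup.mk (wordOf κ (k + 1) []) := by
  rw [mk_wordOf_nil, mk_wordOf_nil, ← listToF_concat, take_succ_get κ hk]

lemma xi_stem : HasStem (xi A κ R) κ := by
  intro l
  rw [xi_iff]
  constructor
  · intro hmem
    obtain ⟨k, N, ⟨hk, _, _⟩, hw⟩ := hmem
    rw [listToF_eq, toWord_mk_reduced (reduced_T l)] at hw
    have hN : N = [] := by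
      rcases List.eq_nil_or_concat N with rfl | ⟨L, b, rfl⟩
      · rfl
      · exfalso
        simp only [List.concat_eq_append] at hw
        have h1 := wordOf_getLast_concat κ (k := k) L b
        rw [← hw] at h1
        have h2 : ((b : ℕ), false) ∈ T l := List.mem_of_mem_getLast? (by rw [h1]; rfl)
        have := mem_T_snd h2
        simp at this
    subst hN
    have hTeq : T l = T (κ.take k) := by
      rw [hw]
      simp [wordOf, Fw]
    rw [T_inj hTeq]
    exact List.take_prefix _ _
  · intro hpre
    refine ⟨l.length, [], SW_nil A κ R hpre.length_le, ?_⟩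
    rw [listToF_eq, toWord_mk_reduced (reduced_T l)]
    have : wordOf κ l.length [] = T (κ.take l.length) := by simp [wordOf, Fw]
    rw [this, ← List.prefix_iff_eq_take.mp hpre]

lemma listToF_mul_inv (x : ℕ) :
    listToF κ * (FreeGroup.of x)⁻¹ = FreeGroup.mk (wordOf κ κ.length [x]) := by
  have h1 : listToF κ = FreeGroup.mk (wordOf κ κ.length []) := by
    rw [mk_wordOf_nil, List.take_length]
  rw [h1, mk_wordOf_mul_inv_of]
  simp

lemma xi_root (hlast : ∀ h : κ ≠ [], κ.getLast h ∈ R) (x : ℕ) :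
    (xi A κ R (listToF κ * (FreeGroup.of x)⁻¹) = true ↔ x ∈ R) := by
  rw [xi_iff, listToF_mul_inv]
  constructor
  · intro hmem
    by_cases hc : κ.getLast? = some x
    · have hne : κ ≠ [] := by intro h; rw [h] at hc; simp at hc
      have : κ.getLast hne = x := by
        rw [List.getLast?_eq_getLast hne] at hc
        simpa using hc
      rw [← this]
      exact hlast hne
    · have hred : Reduced (wordOf κ κ.length [x]) := by
        apply reduced_wordOf
        intro c hcc x' hx'
        simp only [List.head?_cons, Option.mem_some_iff] at hx'
        subst hx'
        intro hcx
        subst hcx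
        rw [List.take_length] at hcc
        exact hc hcc
      obtain ⟨k₃, N₃, ⟨hk₃, _, hhd₃⟩, hw₃⟩ := hmem
      rw [toWord_mk_reduced hred] at hw₃
      obtain ⟨hkk, hNN⟩ := wordOf_inj κ le_rfl hk₃ hw₃
      rw [← hNN] at hhd₃
      exact (hhd₃ x (by simp)).2 hkk.symm
  · intro hR
    apply memS_mk
    refine ⟨le_rfl, List.isChain_singleton _, ?_⟩
    intro x' hx'
    simp only [List.head?_cons, Option.mem_some_iff] at hx'
    subst hx'
    exact ⟨fun h => absurd h (lt_irrefl _), fun _ => hR⟩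


/-! ### Any configuration with given stem and root agrees with `xi` -/

lemma eta_prefix {η : FreeGroup ℕ → Bool}
    (h1 : η 1 = true)
    (h2 : ∀ a b c : FreeGroup ℕ, η a = true → η b = true →
      fgDist a c + fgDist c b = fgDist a b → η c = true)
    {g : FreeGroup ℕ} (hg : η g = true) {u : W} (hu : u <+: g.toWord) :
    η (FreeGroup.mk u) = true := by
  obtain ⟨v, hv⟩ := hu
  have hredu : Reduced u := (reduced_toWord g).prefix ⟨v, hv⟩
  have hredv : Reduced v := (reduced_toWord g).suffix ⟨u, hv⟩
  apply h2 1 g (FreeGroup.mk u) h1 hg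
  have d1 : fgDist 1 (FreeGroup.mk u) = u.length := by
    unfold fgDist
    rw [inv_one, one_mul, toWord_mk_reduced hredu]
  have d2 : fgDist (FreeGroup.mk u) g = v.length := by
    unfold fgDist
    have heq : (FreeGroup.mk u)⁻¹ * g = FreeGroup.mk v := by
      rw [← FreeGroup.mk_toWord (x := g), ← hv, ← FreeGroup.mul_mk]
      group
    rw [heq, toWord_mk_reduced hredv]
  have d3 : fgDist 1 g = g.toWord.length := by
    unfold fgDist
    rw [inv_one, one_mul]
  rw [d1, d2, d3, ← hv]
  simp

lemma SW_dropLast {k : ℕ} {N : List ℕ} {x : ℕ} (h : SW A κ R k (N ++ [x])) : SW A κ R k N := by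
  obtain ⟨hk, hch, hhd⟩ := h
  refine ⟨hk, hch.prefix (List.prefix_append _ _), ?_⟩
  intro x' hx'
  apply hhd
  cases N with
  | nil => simp at hx'
  | cons b N'' =>
    rw [List.cons_append, List.head?_cons]
    rw [List.head?_cons] at hx'
    exact hx'

lemma eta_of_memS {η : FreeGroup ℕ → Bool} (hη : OmegaTau A η) (hstem : HasStem η κ)
    (hroot : ∀ x : ℕ, (η (listToF κ * (FreeGroup.of x)⁻¹) = true ↔ x ∈ R)) :
    ∀ g, memS A κ R g → η g = true := by
  obtain ⟨h1, h2, h3, h4⟩ := hη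
  suffices H : ∀ n k N, N.length = n → SW A κ R k N → η (FreeGroup.mk (wordOf κ k N)) = true by
    rintro g ⟨k, N, hSW, hw⟩
    have := H N.length k N rfl hSW
    rwa [← hw, FreeGroup.mk_toWord] at this
  intro n
  induction n using Nat.strong_induction_on with
  | _ n IH =>
    intro k N hlen hSW
    rcases List.eq_nil_or_concat N with rfl | ⟨N', x, rfl⟩
    · rw [mk_wordOf_nil]
      exact (hstem _).mpr (List.take_prefix _ _)
    · simp only [List.concat_eq_append] at hlen hSW ⊢
      obtain ⟨hk, hch, hhd⟩ := hSW
      have hlt : N'.length < n := by simp at hlen; omega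
      have hSW' : SW A κ R k N' := SW_dropLast A κ R ⟨hk, hch, hhd⟩
      have hg' : η (FreeGroup.mk (wordOf κ k N')) = true := IH N'.length hlt k N' rfl hSW'
      rcases List.eq_nil_or_concat N' with rfl | ⟨N'', m, rfl⟩
      · rcases lt_or_eq_of_le hk with hklt | hkeq
        · have hy : η (FreeGroup.mk (wordOf κ k []) * FreeGroup.of (κ.get ⟨k, hklt⟩)) = true := by
            rw [mk_wordOf_nil_mul_of κ hklt, mk_wordOf_nil]
            exact (hstem _).mpr (List.take_prefix _ _)
          have hA : A x (κ.get ⟨k, hklt⟩) = true := (hhd x (by simp)).1 hklt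
          have hres := (h4 _ _ hg' hy x).mpr hA
          rwa [mk_wordOf_mul_inv_of] at hres
        · subst hkeq
          have hx : x ∈ R := (hhd x (by simp)).2 rfl
          have hres := (hroot x).mpr hx
          rw [listToF_mul_inv] at hres
          simpa using hres
      · simp only [List.concat_eq_append] at *
        have hy : η (FreeGroup.mk (wordOf κ k (N'' ++ [m])) * FreeGroup.of m) = true := by
          rw [mk_wordOf_concat_mul_of]
          exact IH N''.length (by simp at hlen; omega) k N'' rfl (SW_dropLast A κ R hSW')
        have hA : A x m = true :=
          (List.isChain_append.mp hch).2.2 m (by simp [List.getLast?_concat]) x (by simp)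
        have hres := (h4 _ _ hg' hy x).mpr hA
        rwa [mk_wordOf_mul_inv_of] at hres

lemma memS_of_eta {η : FreeGroup ℕ → Bool} (hη : OmegaTau A η) (hstem : HasStem η κ)
    (hroot : ∀ x : ℕ, (η (listToF κ * (FreeGroup.of x)⁻¹) = true ↔ x ∈ R)) :
    ∀ g, η g = true → memS A κ R g := by
  obtain ⟨h1, h2, h3, h4⟩ := hη
  suffices H : ∀ n g, g.toWord.length ≤ n → η g = true → memS A κ R g by
    intro g hg
    exact H g.toWord.length g le_rfl hg
  intro n
  induction n with
  | zero =>
    intro g hg0 _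
    have hnil : g.toWord = [] := List.length_eq_zero_iff.mp (Nat.le_zero.mp hg0)
    exact ⟨0, [], SW_nil A κ R (Nat.zero_le _), by rw [hnil]; simp [wordOf, T, Fw]⟩
  | succ n IH =>
    intro g hglen hg
    rcases List.eq_nil_or_concat g.toWord with hnil | ⟨u, ℓ, hgw⟩
    · exact ⟨0, [], SW_nil A κ R (Nat.zero_le _), by rw [hnil]; simp [wordOf, T, Fw]⟩
    · simp only [List.concat_eq_append] at hgw
      have hupre : u <+: g.toWord := ⟨[ℓ], hgw.symm⟩
      have hured : Reduced u := (reduced_toWord g).prefix hupre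
      have hgu : η (FreeGroup.mk u) = true := eta_prefix h1 h2 hg hupre
      have humem : memS A κ R (FreeGroup.mk u) := by
        apply IH (FreeGroup.mk u) _ hgu
        rw [toWord_mk_reduced hured]
        have := congrArg List.length hgw
        simp at this
        omega
      obtain ⟨k, N, ⟨hk, hch, hhd⟩, hwu⟩ := humem
      rw [toWord_mk_reduced hured] at hwu
      have hgword : Reduced (u ++ [ℓ]) := by rw [← hgw]; exact reduced_toWord g
      have hmkg : FreeGroup.mk u * FreeGroup.mk [ℓ] = g := by
        rw [FreeGroup.mul_mk, ← hgw, FreeGroup.mk_toWord]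
      obtain ⟨a, b⟩ := ℓ
      cases b
      · -- negative letter (a, false)
        have hgw2 : g.toWord = wordOf κ k (N ++ [a]) := by
          rw [hgw, hwu, ← wordOf_append_neg]
        have hxg : η (FreeGroup.mk u * (FreeGroup.of a)⁻¹) = true := by
          rw [← mk_F_singleton, hmkg]
          exact hg
        rcases List.eq_nil_or_concat N with rfl | ⟨N'', m, rfl⟩
        · rcases lt_or_eq_of_le hk with hklt | hkeq
          · have hy : η (FreeGroup.mk u * FreeGroup.of (κ.get ⟨k, hklt⟩)) = true := by
              have heq2 : FreeGroup.mk u * FreeGroup.of (κ.get ⟨k, hklt⟩) =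
                  FreeGroup.mk (wordOf κ (k + 1) []) := by
                rw [show FreeGroup.mk u = FreeGroup.mk (wordOf κ k []) from by rw [hwu],
                  mk_wordOf_nil_mul_of κ hklt]
              rw [heq2, mk_wordOf_nil]
              exact (hstem _).mpr (List.take_prefix _ _)
            have hA : A a (κ.get ⟨k, hklt⟩) = true := (h4 _ _ hgu hy a).mp hxg
            refine ⟨k, [a], ⟨hk, List.isChain_singleton _, ?_⟩, by simpa using hgw2⟩
            intro x' hx'
            simp only [List.head?_cons, Option.mem_some_iff] at hx'
            subst hx'
            exact ⟨fun h => hA, fun h => absurd h (Nat.ne_of_lt hklt)⟩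
          · subst hkeq
            have hroo : η (listToF κ * (FreeGroup.of a)⁻¹) = true := by
              rw [listToF_mul_inv]
              have heq3 : FreeGroup.mk (wordOf κ κ.length [a]) = g := by
                conv_rhs => rw [← FreeGroup.mk_toWord (x := g), hgw2]
                simp
              rw [heq3]
              exact hg
            have haR := (hroot a).mp hroo
            refine ⟨κ.length, [a], ⟨le_rfl, List.isChain_singleton _, ?_⟩, by simpa using hgw2⟩
            intro x' hx'
            simp only [List.head?_cons, Option.mem_some_iff] at hx'
            subst hx'
            exact ⟨fun h => absurd h (lt_irrefl _), fun _ => haR⟩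
        · -- N = N'' ++ [m]
          simp only [List.concat_eq_append] at hwu hch hhd hgw2
          have hy : η (FreeGroup.mk u * FreeGroup.of m) = true := by
            have hmu : FreeGroup.mk u * FreeGroup.of m = FreeGroup.mk (wordOf κ k N'') := by
              rw [show FreeGroup.mk u = FreeGroup.mk (wordOf κ k (N'' ++ [m])) from by rw [hwu],
                mk_wordOf_concat_mul_of]
            rw [hmu]
            apply eta_prefix h1 h2 hgu
            rw [toWord_mk_reduced hured, hwu, wordOf_append_neg]
            exact ⟨[(m, false)], rfl⟩
          have hA : A a m = true := (h4 _ _ hgu hy a).mp hxg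
          refine ⟨k, N'' ++ [m] ++ [a], ⟨hk, ?_, ?_⟩, by simpa using hgw2⟩
          · rw [List.Chain', List.isChain_append]
            refine ⟨hch, List.isChain_singleton _, ?_⟩
            intro p hp q hq
            simp only [List.getLast?_concat, Option.mem_some_iff, List.head?_cons] at hp hq
            subst hp
            subst hq
            exact hA
          · intro x' hx'
            rw [List.head?_append_of_ne_nil _ (by simp)] at hx'
            exact hhd x' hx'
      · -- positive letter (a, true)
        rcases List.eq_nil_or_concat N with rfl | ⟨N'', m, rfl⟩
        · have hgl : g = listToF (κ.take k ++ [a]) := by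
            rw [listToF_concat, ← mk_wordOf_nil, ← hmkg]
            rw [show FreeGroup.mk u = FreeGroup.mk (wordOf κ k []) from by rw [hwu]]
            rfl
          have hpre : κ.take k ++ [a] <+: κ := (hstem _).mp (by rw [← hgl]; exact hg)
          have hlen2 : (κ.take k ++ [a]).length = k + 1 := by
            simp [min_eq_left hk]
          have hk1 : k + 1 ≤ κ.length := by
            have := hpre.length_le
            omega
          have hl : κ.take k ++ [a] = κ.take (k + 1) := by
            have := List.prefix_iff_eq_take.mp hpre
            rw [this, hlen2]
          refine ⟨k + 1, [], SW_nil A κ R hk1, ?_⟩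
          rw [hgw, hwu, wordOf_nil_concat, hl]
          simp [wordOf, Fw]
        · -- contradiction: positive after negative
          exfalso
          simp only [List.concat_eq_append] at hwu hch hhd
          have hy : η (FreeGroup.mk u * FreeGroup.of m) = true := by
            have hmu : FreeGroup.mk u * FreeGroup.of m = FreeGroup.mk (wordOf κ k N'') := by
              rw [show FreeGroup.mk u = FreeGroup.mk (wordOf κ k (N'' ++ [m])) from by rw [hwu],
                mk_wordOf_concat_mul_of]
            rw [hmu]
            apply eta_prefix h1 h2 hgu
            rw [toWord_mk_reduced hured, hwu, wordOf_append_neg]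
            exact ⟨[(m, false)], rfl⟩
          have hz : η (FreeGroup.mk u * FreeGroup.of a) = true := by
            rw [← mk_T_singleton, hmkg]
            exact hg
          have ham : a = m := h3 (FreeGroup.mk u) hgu a m hz hy
          have hjunc := (List.isChain_append.mp hgword).2.2 (m, false)
            (by rw [hwu, wordOf_getLast_concat]; rfl) (a, true) (by simp)
          have : false = true := hjunc (by rw [ham])
          simp at this

lemma eta_eq_xi {η : FreeGroup ℕ → Bool} (hη : OmegaTau A η) (hstem : HasStem η κ)
    (hroot : ∀ x : ℕ, (η (listToF κ * (FreeGroup.of x)⁻¹) = true ↔ x ∈ R)) :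
    η = xi A κ R := by
  funext g
  by_cases h : memS A κ R g
  · rw [eta_of_memS A κ R hη hstem hroot g h, (xi_iff A κ R g).mpr h]
  · have e1 : η g ≠ true := fun hg => h (memS_of_eta A κ R hη hstem hroot g hg)
    have e2 : xi A κ R g ≠ true := fun hx => h ((xi_iff A κ R g).mp hx)
    cases hb : η g <;> cases hx : xi A κ R g <;> simp_all

end StemProof

/-- A bounded configuration of `Ω_A^τ` is uniquely determined by its stem `κ` and the
root `R_ξ(κ) = {x : ξ_{κ x⁻¹} = 1}` of its stem; conversely, every pair `(κ, R)` with
`κ` a finite positive admissible word and `R ⊆ ℕ` containing the last letter of `κ`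
(when `κ ≠ e`) arises from exactly one configuration in `Ω_A^τ`. -/
theorem boundedConfiguration_determined_by_stem_and_root
    (A : ℕ → ℕ → Bool) (κ : List ℕ) (hκ : κ.Chain' (fun a b => A a b = true)) :
    (∀ ξ η : FreeGroup ℕ → Bool, OmegaTau A ξ → OmegaTau A η →
      HasStem ξ κ → HasStem η κ →
      (∀ x : ℕ, ξ (listToF κ * (FreeGroup.of x)⁻¹) = η (listToF κ * (FreeGroup.of x)⁻¹)) →
      ξ = η) ∧
    (∀ R : Set ℕ, (∀ h : κ ≠ [], κ.getLast h ∈ R) →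
      ∃! ξ : FreeGroup ℕ → Bool, OmegaTau A ξ ∧ HasStem ξ κ ∧
        ∀ x : ℕ, (ξ (listToF κ * (FreeGroup.of x)⁻¹) = true ↔ x ∈ R)) := by
  constructor
  · intro ξ η hξ hη hsξ hsη hagree
    set R : Set ℕ := {x | ξ (listToF κ * (FreeGroup.of x)⁻¹) = true} with hR
    have hrootξ : ∀ x : ℕ, (ξ (listToF κ * (FreeGroup.of x)⁻¹) = true ↔ x ∈ R) :=
      fun x => Iff.rfl
    have hrootη : ∀ x : ℕ, (η (listToF κ * (FreeGroup.of x)⁻¹) = true ↔ x ∈ R) := fun x => by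
      rw [← hagree x]
      exact Iff.rfl
    rw [StemProof.eta_eq_xi A κ R hξ hsξ hrootξ, StemProof.eta_eq_xi A κ R hη hsη hrootη]
  · intro R hlast
    refine ⟨StemProof.xi A κ R,
      ⟨⟨StemProof.xi_R1 A κ R, StemProof.xi_R2 A κ R, StemProof.xi_R3 A κ R,
        StemProof.xi_R4 A κ R hκ⟩, StemProof.xi_stem A κ R, StemProof.xi_root A κ R hlast⟩, ?_⟩
    rintro η ⟨hη, hstem, hroot⟩
    exact StemProof.eta_eq_xi A κ R hη hstem hroot
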